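/- With the notation of the discrete Breeden–Litzenberger construction (strikes 0 = x₀ < x₁ < ... < x_J, call prices c_j satisfying the no-arbitrage conditions, and probabilities p_j defined by second differences), additionally assume c_J = 0. Then for every 0 ≤ i ≤ J, ∑_{j=0}^{J} p_j · (x_j - x_i)⁺ = c_i. In particular ∑_{j=0}^{J} p_j x_j = s₀. -/

import Mathlib

/-- The discrete Breeden–Litzenberger probabilities recover the observed call
prices: `∑ p_j (x_j - x_i)⁺ = c_i`, and in particular `∑ p_j x_j = s₀`. -/
theorem breeden_litzenberger_recovers_calls (J : ℕ) (hJ : 1 ≤ J) (x c p : ℕ → ℝ) (s₀ : ℝ)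
    (hx0 : x 0 = 0) (hxmono : ∀ j, j < J → x j < x (j + 1))
    (hc0 : c 0 = s₀)
    (hcdec : ∀ j, j < J → c (j + 1) ≤ c j) (hcJ : c J = 0)
    (hslope1 : (c 0 - c 1) / (x 1 - x 0) ≤ 1)
    (hslopes : ∀ j, 1 ≤ j → j < J →
      (c j - c (j + 1)) / (x (j + 1) - x j) ≤ (c (j - 1) - c j) / (x j - x (j - 1)))
    (hp0 : p 0 = 1 - (s₀ - c 1) / x 1)
    (hpj : ∀ j, 1 ≤ j → j < J →
      p j = (c (j - 1) - c j) / (x j - x (j - 1)) - (c j - c (j + 1)) / (x (j + 1) - x j))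
    (hpJ : p J = (c (J - 1) - c J) / (x J - x (J - 1))) :
    (∀ i, i ≤ J → ∑ j ∈ Finset.range (J + 1), p j * max (x j - x i) 0 = c i) ∧
      ∑ j ∈ Finset.range (J + 1), p j * x j = s₀ := by
  set d : ℕ → ℝ := fun j => (c (j - 1) - c j) / (x j - x (j - 1)) with hd
  -- monotonicity of x on [0, J]
  have mono : ∀ b, b ≤ J → ∀ a, a ≤ b → x a ≤ x b := by
    intro b
    induction b with
    | zero => intro _ a ha; simp [Nat.le_zero.mp ha]
    | succ n ih =>
      intro hb a ha
      rcases Nat.lt_succ_iff_lt_or_eq.mp (Nat.lt_succ_of_le ha) with h | h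
      · exact le_trans (ih (by omega) a (by omega)) (hxmono n (by omega)).le
      · exact le_of_eq (by rw [h])
  -- tail sums of p equal the slopes d
  have tail : ∀ m, m < J → ∑ j ∈ Finset.Ico (J - m) (J + 1), p j = d (J - m) := by
    intro m
    induction m with
    | zero =>
      intro _
      have : Finset.Ico J (J + 1) = {J} := by
        rw [Finset.Ico_add_one_right_eq_Icc, Finset.Icc_self]
      simp [this, hpJ, hd]
    | succ n ih =>
      intro h
      have hk1 : 1 ≤ J - (n + 1) := by omega
      have hkJ : J - (n + 1) < J := by omega
      have hkk : J - (n + 1) + 1 = J - n := by omega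
      rw [Finset.sum_eq_sum_Ico_succ_bot (by omega : J - (n+1) < J + 1), hkk,
        ih (by omega), hpj (J - (n + 1)) hk1 hkJ]
      simp only [hd]
      rw [← hkk]
      simp [Nat.add_sub_cancel]
  -- sums with the positive part equal sums over the tail without it
  have reduce : ∀ i, i ≤ J →
      ∑ j ∈ Finset.range (J + 1), p j * max (x j - x i) 0
        = ∑ j ∈ Finset.Ico (i + 1) (J + 1), p j * (x j - x i) := by
    intro i hi
    have hsplit : ∑ j ∈ Finset.Ico 0 (i + 1), p j * max (x j - x i) 0
        + ∑ j ∈ Finset.Ico (i + 1) (J + 1), p j * max (x j - x i) 0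
        = ∑ j ∈ Finset.Ico 0 (J + 1), p j * max (x j - x i) 0 :=
      Finset.sum_Ico_consecutive _ (by omega) (by omega)
    have h1 : ∑ j ∈ Finset.Ico 0 (i + 1), p j * max (x j - x i) 0 = 0 := by
      apply Finset.sum_eq_zero
      intro j hj
      have hji : j ≤ i := Nat.lt_succ_iff.mp (Finset.mem_Ico.mp hj).2
      have : x j ≤ x i := mono i hi j hji
      rw [max_eq_right (by linarith), mul_zero]
    have h2 : ∑ j ∈ Finset.Ico (i + 1) (J + 1), p j * max (x j - x i) 0
        = ∑ j ∈ Finset.Ico (i + 1) (J + 1), p j * (x j - x i) := by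
      apply Finset.sum_congr rfl
      intro j hj
      have hj' := Finset.mem_Ico.mp hj
      have : x i ≤ x j := mono j (by omega) i (by omega)
      rw [max_eq_left (by linarith)]
    rw [Finset.range_eq_Ico, ← hsplit, h1, zero_add, h2]
  -- main downward induction
  have main : ∀ m, m ≤ J →
      ∑ j ∈ Finset.range (J + 1), p j * max (x j - x (J - m)) 0 = c (J - m) := by
    intro m
    induction m with
    | zero =>
      intro _
      simp only [Nat.sub_zero]
      rw [hcJ]
      apply Finset.sum_eq_zero
      intro j hj
      have hj' := Finset.mem_range.mp hj
      have : x j ≤ x J := mono J le_rfl j (by omega)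
      rw [max_eq_right (by linarith), mul_zero]
    | succ n ih =>
      intro h
      set i := J - (n + 1) with hi
      have hiJ : i < J := by omega
      have hii : i + 1 = J - n := by omega
      have hxlt : x i < x (i + 1) := hxmono i hiJ
      rw [reduce i (by omega)]
      have step : ∀ j ∈ Finset.Ico (i + 1) (J + 1),
          p j * (x j - x i) = p j * (x j - x (i + 1)) + p j * (x (i + 1) - x i) := by
        intro j _; ring
      rw [Finset.sum_congr rfl step, Finset.sum_add_distrib]
      have hA : ∑ j ∈ Finset.Ico (i + 1) (J + 1), p j * (x j - x (i + 1)) = c (i + 1) := by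
        rw [Finset.sum_eq_sum_Ico_succ_bot (by omega : i + 1 < J + 1)]
        have : p (i + 1) * (x (i + 1) - x (i + 1)) = 0 := by ring
        rw [this, zero_add, ← reduce (i + 1) (by omega), hii, ih (by omega), ← hii]
      have hB : ∑ j ∈ Finset.Ico (i + 1) (J + 1), p j * (x (i + 1) - x i)
          = c i - c (i + 1) := by
        rw [← Finset.sum_mul, hii, tail n (by omega), ← hii]
        have hdval : d (i + 1) = (c i - c (i + 1)) / (x (i + 1) - x i) := by
          simp [hd, Nat.add_sub_cancel]
        rw [hdval, div_mul_cancel₀ _ (by linarith : x (i + 1) - x i ≠ 0)]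
      rw [hA, hB]; ring
  constructor
  · intro i hi
    have := main (J - i) (by omega)
    rwa [Nat.sub_sub_self hi] at this
  · have h0 := main J le_rfl
    rw [Nat.sub_self] at h0
    have : ∀ j ∈ Finset.range (J + 1), p j * x j = p j * max (x j - x 0) 0 := by
      intro j hj
      have hj' := Finset.mem_range.mp hj
      have hx : 0 ≤ x j := by
        have := mono j (by omega) 0 (Nat.zero_le j)
        rwa [hx0] at this
      rw [hx0, sub_zero, max_eq_left hx]
    rw [Finset.sum_congr rfl this, h0, hc0]
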